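/- Let s be a natural number, let v : {1,…,s+1} → ℝ and α : {1,…,s+1} × {1,…,s+1} → ℝ satisfy v_i ≥ 0, α_{ij} ≥ 0 (for j < i) and v_i + Σ_{j<i} α_{ij} = 1 for every i. Let b ≥ 0, c ≥ 0, T ≥ 0, h > 0 with h·(T + c) ≤ 1 and h·b ≤ 1, and let S⁰ ≥ 0, I⁰ ≥ 0, R⁰ ≥ 0. Define the stage values S_(i), I_(i), R_(i) by S_(i) = v_i·S⁰ + Σ_{j<i} α_{ij}·(S_(j) − h·(S_(j)·T + c·S_(j))), I_(i) = v_i·I⁰ + Σ_{j<i} α_{ij}·(I_(j) + h·(S_(j)·T − b·I_(j))), R_(i) = v_i·R⁰ + Σ_{j<i} α_{ij}·(R_(j) + h·(b·I_(j) + c·S_(j))). Then S_(i) ≤ S⁰ for every i ∈ {1,…,s+1}; in particular the next time-level value S_(s+1) satisfies S_(s+1) ≤ S⁰. -/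
import Mathlib


theorem stmt_14 (s : ℕ) (v : Fin (s + 1) → ℝ) (α : Fin (s + 1) → Fin (s + 1) → ℝ)
    (hv : ∀ i, 0 ≤ v i) (hα : ∀ i j, j < i → 0 ≤ α i j)
    (hcons : ∀ i, v i + ∑ j ∈ Finset.Iio i, α i j = 1)
    (b c T h : ℝ) (hb : 0 ≤ b) (hc : 0 ≤ c) (hT : 0 ≤ T) (hh : 0 < h)
    (hcond1 : h * (T + c) ≤ 1) (hcond2 : h * b ≤ 1)
    (S₀ I₀ R₀ : ℝ) (hS₀ : 0 ≤ S₀) (hI₀ : 0 ≤ I₀) (hR₀ : 0 ≤ R₀)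
    (S I R : Fin (s + 1) → ℝ)
    (hS : ∀ i, S i = v i * S₀ +
      ∑ j ∈ Finset.Iio i, α i j * (S j - h * (S j * T + c * S j)))
    (hI : ∀ i, I i = v i * I₀ +
      ∑ j ∈ Finset.Iio i, α i j * (I j + h * (S j * T - b * I j)))
    (hR : ∀ i, R i = v i * R₀ +
      ∑ j ∈ Finset.Iio i, α i j * (R j + h * (b * I j + c * S j))) :
    (∀ i, S i ≤ S₀) ∧ S (Fin.last s) ≤ S₀ := by
  have key : ∀ i : Fin (s + 1), 0 ≤ S i ∧ S i ≤ S₀ := by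
    have main : ∀ n, ∀ i : Fin (s + 1), i.val < n → 0 ≤ S i ∧ S i ≤ S₀ := by
      intro n
      induction n with
      | zero => exact fun i hi => absurd hi (by omega)
      | succ n ihn =>
        intro i hi
        have ih : ∀ j, j < i → 0 ≤ S j ∧ S j ≤ S₀ := fun j hj =>
          ihn j (by have := Fin.lt_def.mp hj; omega)
        have hfac0 : 0 ≤ 1 - h * (T + c) := by linarith
        have hstage : ∀ j, j < i → 0 ≤ α i j * (S j - h * (S j * T + c * S j)) ∧
            α i j * (S j - h * (S j * T + c * S j)) ≤ α i j * S₀ := by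
          intro j hj
          obtain ⟨hSj0, hSjS⟩ := ih j hj
          have heq : S j - h * (S j * T + c * S j) = S j * (1 - h * (T + c)) := by ring
          constructor
          · exact mul_nonneg (hα i j hj) (by rw [heq]; exact mul_nonneg hSj0 hfac0)
          · apply mul_le_mul_of_nonneg_left _ (hα i j hj)
            rw [heq]
            calc S j * (1 - h * (T + c)) ≤ S j * 1 :=
                  mul_le_mul_of_nonneg_left (by have := mul_nonneg hh.le (add_nonneg hT hc); linarith) hSj0
              _ = S j := mul_one _
              _ ≤ S₀ := hSjS
        constructor
        · rw [hS i]
          have h1 : 0 ≤ v i * S₀ := mul_nonneg (hv i) hS₀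
          have h2 : 0 ≤ ∑ j ∈ Finset.Iio i, α i j * (S j - h * (S j * T + c * S j)) :=
            Finset.sum_nonneg fun j hj => (hstage j (Finset.mem_Iio.mp hj)).1
          linarith
        · rw [hS i]
          have h2 : ∑ j ∈ Finset.Iio i, α i j * (S j - h * (S j * T + c * S j)) ≤
              ∑ j ∈ Finset.Iio i, α i j * S₀ :=
            Finset.sum_le_sum fun j hj => (hstage j (Finset.mem_Iio.mp hj)).2
          have h3 : v i * S₀ + ∑ j ∈ Finset.Iio i, α i j * S₀ = S₀ := by
            rw [← Finset.sum_mul, ← add_mul, hcons i, one_mul]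
          linarith
    exact fun i => main (i.val + 1) i (by omega)
  exact ⟨fun i => (key i).2, (key (Fin.last s)).2⟩
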